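/- Let v₀(y) = (3/y²)·e^{y²/4}·(−y + (2+y²)·D₊(y/2)) and v₁(y) = 1 + 2/y², where D₊(y) = e^{−y²}·∫₀^y e^{x²} dx is the Dawson integral. Then the Wronskian satisfies v₀(y)·v₁'(y) − v₀'(y)·v₁(y) = −6·y^{−2}·e^{y²/4} for all y > 0. -/

import Mathlib

noncomputable def dawson (y : ℝ) : ℝ := Real.exp (-y^2) * ∫ x in (0:ℝ)..y, Real.exp (x^2)

noncomputable def v₀ (y : ℝ) : ℝ :=
  3 / y^2 * Real.exp (y^2/4) * (-y + (2 + y^2) * dawson (y/2))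

noncomputable def v₁ (y : ℝ) : ℝ := 1 + 2 / y^2

lemma hasDerivAt_dawson (y : ℝ) : HasDerivAt dawson (1 - 2*y*dawson y) y := by
  have hc : Continuous fun x : ℝ => Real.exp (x^2) := by continuity
  have hI : HasDerivAt (fun t : ℝ => ∫ x in (0:ℝ)..t, Real.exp (x^2)) (Real.exp (y^2)) y :=
    (hc.integral_hasStrictDerivAt 0 y).hasDerivAt
  have he : HasDerivAt (fun t : ℝ => Real.exp (-t^2)) (Real.exp (-y^2) * (-(2*y))) y := by
    have : HasDerivAt (fun t : ℝ => -t^2) (-(2*y)) y := by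
      simpa using ((hasDerivAt_pow 2 y).fun_neg)
    exact this.exp
  have hmul : HasDerivAt dawson (Real.exp (-y^2) * (-(2*y)) * (∫ x in (0:ℝ)..y, Real.exp (x^2))
      + Real.exp (-y^2) * Real.exp (y^2)) y := he.mul hI
  refine hmul.congr_deriv ?_
  rw [← Real.exp_add]
  simp [dawson]
  ring

theorem wronskian_v0_v1 (y : ℝ) (hy : 0 < y) :
    v₀ y * deriv v₁ y - deriv v₀ y * v₁ y = -6 / y^2 * Real.exp (y^2/4) := by
  have hy0 : y ≠ 0 := hy.ne'
  set D := dawson (y/2) with hD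
  -- derivative of v₁
  have h1 : HasDerivAt v₁ (-4/y^3) y := by
    have h := (hasDerivAt_const y (1:ℝ)).add
      ((hasDerivAt_const y (2:ℝ)).div (hasDerivAt_pow 2 y) (pow_ne_zero 2 hy0))
    have h2 := h.congr_deriv (g' := -4/y^3) (by push_cast; field_simp; ring)
    exact h2.congr_of_eventuallyEq (by filter_upwards with t; simp [v₁])
  -- derivative of dawson (y/2)
  have hDd : HasDerivAt (fun t : ℝ => dawson (t/2)) ((1 - y*D) * (1/2)) y := by
    have h2 : HasDerivAt (fun t : ℝ => t/2) (1/2) y := by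
      simpa using (hasDerivAt_id y).div_const 2
    have := (hasDerivAt_dawson (y/2)).comp y h2
    simpa [hD, Function.comp_def] using this.congr_deriv (by ring)
  -- derivative of v₀
  have hA : HasDerivAt (fun t : ℝ => 3 / t^2) (-6/y^3) y := by
    have := (hasDerivAt_const y (3:ℝ)).div (hasDerivAt_pow 2 y) (pow_ne_zero 2 hy0)
    refine this.congr_deriv ?_
    field_simp
    ring
  have hE : HasDerivAt (fun t : ℝ => Real.exp (t^2/4)) (Real.exp (y^2/4) * (y/2)) y := by
    have h : HasDerivAt (fun t : ℝ => t^2/4) (y/2) y := by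
      simpa using ((hasDerivAt_pow 2 y).div_const 4).congr_deriv (by ring)
    exact h.exp
  have hB : HasDerivAt (fun t : ℝ => -t + (2 + t^2) * dawson (t/2))
      (-1 + ((2*y) * D + (2 + y^2) * ((1 - y*D) * (1/2)))) y := by
    have hq : HasDerivAt (fun t : ℝ => 2 + t^2) (2*y) y := by
      simpa using (hasDerivAt_const y (2:ℝ)).fun_add (hasDerivAt_pow 2 y)
    have := ((hasDerivAt_id y).fun_neg).fun_add (hq.fun_mul hDd)
    simpa [hD] using this
  have h0 : HasDerivAt v₀
      ((-6/y^3 * Real.exp (y^2/4) + 3/y^2 * (Real.exp (y^2/4) * (y/2)))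
        * (-y + (2 + y^2) * D)
       + 3/y^2 * Real.exp (y^2/4)
        * (-1 + ((2*y) * D + (2 + y^2) * ((1 - y*D) * (1/2))))) y := by
    have := (hA.mul hE).mul hB
    exact this.congr_of_eventuallyEq (by filter_upwards with t; simp [v₀])
  rw [h1.deriv, h0.deriv]
  simp only [v₀, v₁, ← hD]
  field_simp
  ring
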